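/- Let (X,d) be a metric space, p ≥ 1, and μ a Borel probability measure on X such that ∫_X exp(α d(x,y)^p) dμ(y) < ∞ for some x ∈ X and some α > 0. If {μ_n} are Borel probability measures with relative entropy H(μ_n | μ) → 0, then μ_n → μ in the p-Wasserstein topology (i.e., μ_n → μ weakly and ∫ d(x,y)^p dμ_n(y) → ∫ d(x,y)^p dμ(y)). -/

import Mathlib

open Filter MeasureTheory Topology TopologicalSpace Metric Set

noncomputable section

/-- Kuratowski lower limit of a sequence of sets. -/
def KurLi {Y : Type*} [TopologicalSpace Y] (A : ℕ → Set Y) : Set Y :=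
  {x | ∀ U ∈ nhds x, ∀ᶠ n in atTop, (U ∩ A n).Nonempty}

/-- Kuratowski upper limit of a sequence of sets. -/
def KurLs {Y : Type*} [TopologicalSpace Y] (A : ℕ → Set Y) : Set Y :=
  {x | ∀ U ∈ nhds x, ∃ᶠ n in atTop, (U ∩ A n).Nonempty}

variable {X : Type*} [MetricSpace X] [MeasurableSpace X]

/-- The clustering cost `W_p(S,μ) = ∫ d(y,S)^p dμ(y)`. -/
def Wp (p : ℝ) (S : Set X) (μ : Measure X) : ℝ :=
  ∫ y, infDist y S ^ p ∂μ

/-- `μ` has a finite `p`-th moment. -/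
def FinMom (p : ℝ) (μ : Measure X) : Prop :=
  ∃ x : X, Integrable (fun y => dist x y ^ p) μ

/-- Convergence in the `p`-Wasserstein topology: weak convergence together with
convergence of the `p`-th moments about some point. -/
def WassTendsto (p : ℝ) (μ : ℕ → Measure X) (ν : Measure X) : Prop :=
  (∀ f : BoundedContinuousFunction X ℝ,
      Tendsto (fun n => ∫ y, f y ∂ μ n) atTop (𝓝 (∫ y, f y ∂ ν))) ∧
  ∃ x : X, Tendsto (fun n => ∫ y, dist x y ^ p ∂ μ n) atTop (𝓝 (∫ y, dist x y ^ p ∂ ν))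

/-- `S` is a feasible set of cluster centers: a nonempty finite subset of `R`
with at most `k` points. -/
def Feas (k : ℕ) (R S : Set X) : Prop :=
  S ⊆ R ∧ S.Finite ∧ S.Nonempty ∧ S.ncard ≤ k

/-- The optimal clustering cost `m_{k,p}(μ,R)`. -/
def mCost (p : ℝ) (μ : Measure X) (k : ℕ) (R : Set X) : ℝ :=
  sInf ((fun S => Wp p S μ) '' {S | Feas k R S})

/-- The set of optimal cluster-center sets `C_p(μ,k,R)`, viewed as a subset of the
hyperspace of nonempty compact subsets of `X` with the Hausdorff metric. -/
def Cp (p : ℝ) (μ : Measure X) (k : ℕ) (R : Set X) : Set (NonemptyCompacts X) :=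
  {S | Feas k R (S : Set X) ∧ ∀ T : Set X, Feas k R T → Wp p (S : Set X) μ ≤ Wp p T μ}

/-- The support of a measure on a metric space. -/
def measSupp (μ : Measure X) : Set X :=
  {x | ∀ r : ℝ, 0 < r → μ (Metric.ball x r) ≠ 0}

/-- The relative entropy (KL divergence) `H(ν|μ) = ∫ (dν/dμ) log(dν/dμ) dμ` if `ν ≪ μ`
(and the integrand is integrable, otherwise the entropy is `+∞`), valued in `EReal`. -/
def relEntropy {Y : Type*} [MeasurableSpace Y] (ν μ : Measure Y) : EReal :=
  haveI := Classical.propDecidable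
    (ν ≪ μ ∧ Integrable
      (fun y => (ν.rnDeriv μ y).toReal * Real.log (ν.rnDeriv μ y).toReal) μ)
  if ν ≪ μ ∧ Integrable
      (fun y => (ν.rnDeriv μ y).toReal * Real.log (ν.rnDeriv μ y).toReal) μ then
    ((∫ y, (ν.rnDeriv μ y).toReal * Real.log (ν.rnDeriv μ y).toReal ∂μ : ℝ) : EReal)
  else ⊤

private lemma aux_young (u v : ℝ) (hv : 0 ≤ v) :
    u * v ≤ Real.exp u + v * Real.log v - v := by
  rcases eq_or_lt_of_le hv with h | h
  · simp only [← h, mul_zero, Real.log_zero, zero_mul, sub_zero, add_zero]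
    positivity
  · have h1 := Real.add_one_le_exp (u - Real.log v)
    have h2 := mul_le_mul_of_nonneg_left h1 h.le
    rw [Real.exp_sub, Real.exp_log h] at h2
    have h3 : v * (Real.exp u / v) = Real.exp u := by field_simp
    rw [h3] at h2
    nlinarith

private lemma aux_sqrt_le (v : ℝ) (hv : 0 ≤ v) :
    (Real.sqrt v - 1) ^ 2 ≤ v * Real.log v - v + 1 := by
  rcases eq_or_lt_of_le hv with h | h
  · simp [← h]
  · have hw0 : 0 < Real.sqrt v := Real.sqrt_pos.2 h
    set w := Real.sqrt v with hw
    have hwv : w ^ 2 = v := Real.sq_sqrt hv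
    have hlog : Real.log v = 2 * Real.log w := by
      rw [← hwv, Real.log_pow]; push_cast; ring
    have h1 : Real.log w⁻¹ ≤ w⁻¹ - 1 := Real.log_le_sub_one_of_pos (by positivity)
    rw [Real.log_inv] at h1
    have h2 : w - 1 ≤ w * Real.log w := by
      have h4 := mul_le_mul_of_nonneg_left h1 hw0.le
      have h3 : w * w⁻¹ = 1 := mul_inv_cancel₀ hw0.ne'
      nlinarith
    rw [← hwv] at hlog ⊢
    rw [hlog]
    nlinarith [h2, hw0.le]

private lemma aux_pinsker (v ε : ℝ) (hv : 0 ≤ v) (hε : 0 < ε) :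
    |v - 1| ≤ ε * (2 * v + 2) + (v * Real.log v - v + 1) / (4 * ε) := by
  have hA := aux_sqrt_le v hv
  set w := Real.sqrt v with hw
  have hw0 : 0 ≤ w := Real.sqrt_nonneg v
  have hwv : w ^ 2 = v := Real.sq_sqrt hv
  have habs : |v - 1| = |w - 1| * (w + 1) := by
    rw [← abs_of_nonneg (by linarith : (0:ℝ) ≤ w + 1), ← abs_mul]
    congr 1
    nlinarith
  have h4 : (0:ℝ) < 4 * ε := by linarith
  have key : |w - 1| * (w + 1) ≤ (4 * ε ^ 2 * (2 * v + 2) + (v * Real.log v - v + 1)) / (4 * ε) := by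
    rw [le_div_iff₀ h4]
    nlinarith [sq_nonneg (|w - 1| - 2 * ε * (w + 1)), sq_abs (w - 1), sq_nonneg (w - 1),
      abs_nonneg (w - 1), sq_nonneg ε, mul_nonneg (sq_nonneg ε) (sq_nonneg (w - 1))]
  rw [habs]
  refine key.trans (le_of_eq ?_)
  field_simp

set_option maxHeartbeats 1000000 in
/-- If `μ` has a finite `L^p`-exponential moment and `H(ν_n | μ) → 0`, then `ν_n → μ`
in the `p`-Wasserstein topology. -/
theorem stmt15 {X : Type*} [MetricSpace X] [MeasurableSpace X] [BorelSpace X]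
    (p : ℝ) (hp : 1 ≤ p) (μ : Measure X) [IsProbabilityMeasure μ]
    (ν : ℕ → Measure X) [∀ n, IsProbabilityMeasure (ν n)]
    (x : X) (α : ℝ) (hα : 0 < α)
    (hexp : Integrable (fun y => Real.exp (α * dist x y ^ p)) μ)
    (hH : Tendsto (fun n => relEntropy (ν n) μ) atTop (𝓝 (0 : EReal))) :
    WassTendsto p ν μ := by
  classical
  have hp0 : (0:ℝ) < p := lt_of_lt_of_le one_pos hp
  set g : X → ℝ := fun y => dist x y ^ p with hgdef
  have hg0 : ∀ y, 0 ≤ g y := fun y => Real.rpow_nonneg dist_nonneg p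
  have hgc : Continuous g :=
    Continuous.rpow_const (continuous_const.dist continuous_id) (fun y => Or.inr hp0.le)
  have hgm : Measurable g := hgc.measurable
  have hexp' : Integrable (fun y => Real.exp (α * g y)) μ := hexp
  have hgint : Integrable g μ := by
    refine (hexp'.const_mul α⁻¹).mono' hgc.aestronglyMeasurable (ae_of_all _ fun y => ?_)
    have h1 : α * g y ≤ Real.exp (α * g y) := by
      have := Real.add_one_le_exp (α * g y); linarith
    rw [Real.norm_of_nonneg (hg0 y)]
    calc g y = α⁻¹ * (α * g y) := by field_simp
      _ ≤ α⁻¹ * Real.exp (α * g y) := mul_le_mul_of_nonneg_left h1 (by positivity)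
  -- density notation
  set F : ℕ → X → ℝ := fun n y => ((ν n).rnDeriv μ y).toReal with hF
  set Hre : ℕ → ℝ := fun n => ∫ y, F n y * Real.log (F n y) ∂μ with hHre
  have hFmeas : ∀ n, Measurable (F n) := fun n => (Measure.measurable_rnDeriv _ _).ennreal_toReal
  have hF0 : ∀ n y, 0 ≤ F n y := fun n y => ENNReal.toReal_nonneg
  have hFint : ∀ n, Integrable (F n) μ := fun n => Measure.integrable_toReal_rnDeriv
  have hAev : ∀ᶠ n in atTop,
      (ν n ≪ μ) ∧ Integrable (fun y => F n y * Real.log (F n y)) μ := by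
    have h1 : ∀ᶠ n in atTop, relEntropy (ν n) μ < 1 :=
      hH.eventually_lt_const (by norm_num)
    filter_upwards [h1] with n hn
    unfold relEntropy at hn
    split_ifs at hn with hc
    · exact hc
    · exact absurd hn (lt_irrefl _ (lt_of_le_of_lt le_top hn)).elim
  have hHt : Tendsto Hre atTop (𝓝 0) := by
    have hev : (fun n => relEntropy (ν n) μ) =ᶠ[atTop] fun n => ((Hre n : ℝ) : EReal) := by
      filter_upwards [hAev] with n hn
      unfold relEntropy
      split_ifs with hc
      · rfl
      · exact absurd hn hc
    have h2 : Tendsto (fun n => ((Hre n : ℝ) : EReal)) atTop (𝓝 (0 : EReal)) := hH.congr' hev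
    rw [← EReal.coe_zero] at h2
    exact EReal.tendsto_coe.mp h2
  -- integral of density is 1
  have hI1 : ∀ n, ν n ≪ μ → ∫ y, F n y ∂μ = 1 := by
    intro n hn
    rw [hF]
    rw [Measure.integral_toReal_rnDeriv hn]
    simp
  -- total variation-like quantity
  set TV : ℕ → ℝ := fun n => ∫ y, |F n y - 1| ∂μ with hTVdef
  have hTVint : ∀ n, Integrable (fun y => |F n y - 1|) μ :=
    fun n => ((hFint n).sub (integrable_const 1)).abs
  have hTV0 : ∀ n, 0 ≤ TV n := fun n => integral_nonneg (fun y => abs_nonneg _)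
  have hTVt : Tendsto TV atTop (𝓝 0) := by
    rw [NormedAddCommGroup.tendsto_nhds_zero]
    intro ε hε
    have hε8 : (0:ℝ) < ε / 8 := by linarith
    have hev2 : ∀ᶠ n in atTop, Hre n < ε ^ 2 / 4 := hHt.eventually_lt_const (by positivity)
    filter_upwards [hAev, hev2] with n hA hH2
    have i1 : Integrable (fun y => ε/8 * (2 * F n y + 2)) μ := by
      exact (((hFint n).const_mul 2).add (integrable_const 2)).const_mul (ε/8)
    have i2 : Integrable (fun y => (F n y * Real.log (F n y) - F n y + 1) / (4 * (ε/8))) μ := by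
      exact ((hA.2.sub (hFint n)).add (integrable_const 1)).div_const _
    have i3 : Integrable (fun y => 2 * F n y + 2) μ := by
      exact ((hFint n).const_mul 2).add (integrable_const 2)
    have i4 : Integrable (fun y => F n y * Real.log (F n y) - F n y + 1) μ := by
      exact (hA.2.sub (hFint n)).add (integrable_const 1)
    have i5 : Integrable (fun y => F n y * Real.log (F n y) - F n y) μ := hA.2.sub (hFint n)
    have hmono : TV n ≤ ∫ y, (ε/8 * (2 * F n y + 2)
        + (F n y * Real.log (F n y) - F n y + 1) / (4 * (ε/8))) ∂μ := by
      exact integral_mono (hTVint n) (i1.add i2) (fun y => aux_pinsker _ _ (hF0 n y) hε8)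
    have e3 : ∫ y, (2 * F n y + 2) ∂μ = 4 := by
      rw [integral_add ((hFint n).const_mul 2) (integrable_const 2), integral_const_mul,
        hI1 n hA.1]
      norm_num
    have e4 : ∫ y, (F n y * Real.log (F n y) - F n y + 1) ∂μ = Hre n := by
      rw [integral_add i5 (integrable_const 1), integral_sub hA.2 (hFint n), hI1 n hA.1]
      simp [hHre]
    have hcalc : ∫ y, (ε/8 * (2 * F n y + 2)
        + (F n y * Real.log (F n y) - F n y + 1) / (4 * (ε/8))) ∂μ
        = ε/8 * 4 + Hre n / (4 * (ε/8)) := by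
      rw [integral_add i1 i2, integral_const_mul, integral_div, e3, e4]
    rw [Real.norm_of_nonneg (hTV0 n)]
    have hb : TV n ≤ ε/8 * 4 + Hre n / (4 * (ε/8)) := hcalc ▸ hmono
    have hd : Hre n / (4 * (ε/8)) < ε / 2 := by
      rw [div_lt_iff₀ (by positivity)]
      nlinarith
    nlinarith [hTV0 n]
  constructor
  · -- weak convergence
    intro f
    rw [← tendsto_sub_nhds_zero_iff]
    apply squeeze_zero_norm' (a := fun n => ‖f‖ * TV n)
    · filter_upwards [hAev] with n hA
      have hfν : Integrable (fun y => f y) (ν n) := f.integrable (ν n)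
      have hfμ : Integrable (fun y => f y) μ := f.integrable μ
      have hfFint : Integrable (fun y => F n y * f y) μ := by
        have h1 := (integrable_rnDeriv_smul_iff hA.1).2 hfν
        simpa [smul_eq_mul] using h1
      have hint : ∫ y, f y ∂(ν n) = ∫ y, F n y * f y ∂μ := by
        rw [← integral_rnDeriv_smul hA.1]
        simp [smul_eq_mul]
        rfl
      calc ‖∫ y, f y ∂(ν n) - ∫ y, f y ∂μ‖
          = ‖∫ y, (F n y * f y - f y) ∂μ‖ := by
            rw [hint, integral_sub hfFint hfμ]
        _ ≤ ∫ y, ‖F n y * f y - f y‖ ∂μ := norm_integral_le_integral_norm _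
        _ ≤ ∫ y, ‖f‖ * |F n y - 1| ∂μ := by
            refine integral_mono (hfFint.sub hfμ).norm ((hTVint n).const_mul _) fun y => ?_
            rw [Real.norm_eq_abs]
            have he : F n y * f y - f y = f y * (F n y - 1) := by ring
            rw [he, abs_mul]
            exact mul_le_mul_of_nonneg_right
              ((abs_le.2 (f.norm_coe_le_norm y |> fun h => ⟨neg_le_of_neg_le (by
                have := f.norm_coe_le_norm y
                rw [Real.norm_eq_abs] at this
                linarith [abs_le.1 this |>.1]), by
                have := f.norm_coe_le_norm y
                rw [Real.norm_eq_abs] at this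
                linarith [abs_le.1 this |>.2]⟩)) : |f y| ≤ ‖f‖)
              (abs_nonneg _)
        _ = ‖f‖ * TV n := integral_const_mul _ _
    · simpa using hTVt.const_mul ‖f‖
  · -- moment convergence
    refine ⟨x, ?_⟩
    rw [← tendsto_sub_nhds_zero_iff, NormedAddCommGroup.tendsto_nhds_zero]
    intro ε hε
    -- tail quantity
    set T : ℕ → ℝ := fun M =>
      ∫ y, Set.indicator {y : X | (M:ℝ) < g y} (fun y => Real.exp (α * g y) + g y) y ∂μ with hTdef
    have hsmeas : ∀ M : ℕ, MeasurableSet {y : X | (M:ℝ) < g y} :=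
      fun M => measurableSet_lt measurable_const hgm
    have hbint : Integrable (fun y => Real.exp (α * g y) + g y) μ := hexp'.add hgint
    have hTt : Tendsto T atTop (𝓝 0) := by
      have h0 : (0:ℝ) = ∫ (_ : X), (0:ℝ) ∂μ := by simp
      rw [hTdef, h0]
      apply tendsto_integral_of_dominated_convergence (fun y => Real.exp (α * g y) + g y)
      · exact fun M => (hbint.1.indicator (hsmeas M))
      · exact hbint
      · intro M
        refine ae_of_all _ fun y => ?_
        refine (norm_indicator_le_norm_self _ _).trans (le_of_eq ?_)
        exact Real.norm_of_nonneg (add_nonneg (Real.exp_pos _).le (hg0 y))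
      · refine ae_of_all _ fun y => ?_
        obtain ⟨M₀, hM₀⟩ := exists_nat_ge (g y)
        rw [tendsto_congr' ?_]
        · exact tendsto_const_nhds
        · filter_upwards [eventually_ge_atTop M₀] with M hM
          apply Set.indicator_of_notMem
          simp only [Set.mem_setOf_eq, not_lt]
          exact le_trans hM₀ (Nat.cast_le.2 hM)
    have hδ : (0:ℝ) < min (ε/4) (ε*α/8) := by positivity
    obtain ⟨M, hM⟩ := (hTt.eventually_lt_const hδ).exists
    set s : Set X := {y : X | (M:ℝ) < g y} with hsdef
    have hsm : MeasurableSet s := hsmeas M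
    have hev2 : ∀ᶠ n in atTop, Hre n < ε*α/8 := hHt.eventually_lt_const (by positivity)
    have hev3 : ∀ᶠ n in atTop, TV n < ε/(4*(M+1)) := hTVt.eventually_lt_const (by positivity)
    filter_upwards [hAev, hev2, hev3] with n hA hH2 hT3
    have i5 : Integrable (fun y => F n y * Real.log (F n y) - F n y) μ := hA.2.sub (hFint n)
    -- integrability of F * g
    have hmaj : ∀ y, F n y * g y ≤
        α⁻¹ * (Real.exp (α * g y) + (F n y * Real.log (F n y) - F n y)) := by
      intro y
      have hy := aux_young (α * g y) (F n y) (hF0 n y)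
      have h2 : α * (F n y * g y) ≤
          Real.exp (α * g y) + (F n y * Real.log (F n y) - F n y) := by nlinarith
      calc F n y * g y = α⁻¹ * (α * (F n y * g y)) := by field_simp
        _ ≤ α⁻¹ * (Real.exp (α * g y) + (F n y * Real.log (F n y) - F n y)) :=
            mul_le_mul_of_nonneg_left h2 (by positivity)
    have imaj : Integrable (fun y => α⁻¹ * (Real.exp (α * g y)
        + (F n y * Real.log (F n y) - F n y))) μ := by
      exact (hexp'.add i5).const_mul _
    have hFgint : Integrable (fun y => F n y * g y) μ := by
      refine imaj.mono' ((hFmeas n).mul hgm).aestronglyMeasurable (ae_of_all _ fun y => ?_)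
      rw [Real.norm_of_nonneg (mul_nonneg (hF0 n y) (hg0 y))]
      exact hmaj y
    -- integral wrt ν n
    have hint : ∫ y, g y ∂(ν n) = ∫ y, F n y * g y ∂μ := by
      rw [← integral_rnDeriv_smul hA.1]
      simp [smul_eq_mul]
      rfl
    -- tail integrability
    have hindFg : Integrable (fun y => s.indicator g y * F n y) μ := by
      refine hFgint.mono' ((hgm.indicator hsm).mul (hFmeas n)).aestronglyMeasurable
        (ae_of_all _ fun y => ?_)
      have hiy : 0 ≤ s.indicator g y := Set.indicator_nonneg (fun y _ => hg0 y) y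
      rw [Real.norm_of_nonneg (mul_nonneg hiy (hF0 n y))]
      have hle : s.indicator g y ≤ g y := Set.indicator_le_self' (fun y _ => hg0 y) y
      nlinarith [hF0 n y, hg0 y]
    have hindexp : Integrable (fun y => s.indicator (fun z => Real.exp (α * g z)) y) μ :=
      hexp'.indicator hsm
    -- Young tail bound
    have htail1 : ∫ y, s.indicator g y * F n y ∂μ ≤ (T M + Hre n) / α := by
      rw [le_div_iff₀ hα]
      have hpt : ∀ y, (s.indicator g y * F n y) * α ≤
          1 + s.indicator (fun z => Real.exp (α * g z)) y
            + (F n y * Real.log (F n y) - F n y) := by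
        intro y
        have hy := aux_young (α * s.indicator g y) (F n y) (hF0 n y)
        have hexpind : Real.exp (α * s.indicator g y) ≤
            1 + s.indicator (fun z => Real.exp (α * g z)) y := by
          by_cases hmem : y ∈ s
          · rw [Set.indicator_of_mem hmem, Set.indicator_of_mem hmem]
            linarith
          · rw [Set.indicator_of_notMem hmem, Set.indicator_of_notMem hmem]
            simp
        nlinarith
      have j1 : Integrable (fun y => 1 + s.indicator (fun z => Real.exp (α * g z)) y) μ :=
        (integrable_const 1).add hindexp
      have hrint : Integrable (fun y => 1 + s.indicator (fun z => Real.exp (α * g z)) y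
          + (F n y * Real.log (F n y) - F n y)) μ := j1.add i5
      have hlint : Integrable (fun y => (s.indicator g y * F n y) * α) μ := hindFg.mul_const α
      have h1 := integral_mono hlint hrint hpt
      rw [integral_mul_const] at h1
      have h2 : ∫ y, (1 + s.indicator (fun z => Real.exp (α * g z)) y
          + (F n y * Real.log (F n y) - F n y)) ∂μ
          = 1 + (∫ y, s.indicator (fun z => Real.exp (α * g z)) y ∂μ)
            + (Hre n - 1) := by
        rw [integral_add j1 i5, integral_add (integrable_const 1) hindexp,
          integral_sub hA.2 (hFint n), hI1 n hA.1]
        simp [hHre]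
      rw [h2] at h1
      have h3 : ∫ y, s.indicator (fun z => Real.exp (α * g z)) y ∂μ ≤ T M := by
        refine integral_mono hindexp (hbint.indicator hsm) fun y => ?_
        exact Set.indicator_le_indicator (le_add_of_nonneg_right (hg0 y))
      linarith
    have htail2 : ∫ y, s.indicator g y ∂μ ≤ T M := by
      refine integral_mono (hgint.indicator hsm) (hbint.indicator hsm) fun y => ?_
      exact Set.indicator_le_indicator (le_add_of_nonneg_left (Real.exp_pos _).le)
    -- pointwise bound
    have hpt2 : ∀ y, |F n y * g y - g y| ≤
        (M:ℝ) * |F n y - 1| + (s.indicator g y * F n y + s.indicator g y) := by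
      intro y
      have h1 : |F n y * g y - g y| = g y * |F n y - 1| := by
        rw [show F n y * g y - g y = g y * (F n y - 1) by ring, abs_mul,
          abs_of_nonneg (hg0 y)]
      have habs : |F n y - 1| ≤ F n y + 1 :=
        abs_le.2 ⟨by linarith [hF0 n y], by linarith [hF0 n y]⟩
      by_cases hy : y ∈ s
      · rw [Set.indicator_of_mem hy]
        calc |F n y * g y - g y| = g y * |F n y - 1| := h1
          _ ≤ g y * (F n y + 1) := mul_le_mul_of_nonneg_left habs (hg0 y)
          _ = g y * F n y + g y := by ring
          _ ≤ (M:ℝ) * |F n y - 1| + (g y * F n y + g y) :=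
              le_add_of_nonneg_left (mul_nonneg (Nat.cast_nonneg M) (abs_nonneg _))
      · rw [Set.indicator_of_notMem hy]
        have hgM : g y ≤ (M:ℝ) := not_lt.1 hy
        rw [h1]
        simp only [zero_mul, add_zero]
        exact mul_le_mul_of_nonneg_right hgM (abs_nonneg _)
      -- end
    have hil : Integrable (fun y => |F n y * g y - g y|) μ := (hFgint.sub hgint).abs
    have j2 : Integrable (fun y => s.indicator g y) μ := hgint.indicator hsm
    have j3 : Integrable (fun y => s.indicator g y * F n y + s.indicator g y) μ := hindFg.add j2
    have j4 : Integrable (fun y => (M:ℝ) * |F n y - 1|) μ := (hTVint n).const_mul _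
    have hir : Integrable (fun y => (M:ℝ) * |F n y - 1|
        + (s.indicator g y * F n y + s.indicator g y)) μ := j4.add j3
    calc ‖∫ y, g y ∂(ν n) - ∫ y, g y ∂μ‖
        = ‖∫ y, (F n y * g y - g y) ∂μ‖ := by
          rw [hint, integral_sub hFgint hgint]
      _ ≤ ∫ y, ‖F n y * g y - g y‖ ∂μ := norm_integral_le_integral_norm _
      _ = ∫ y, |F n y * g y - g y| ∂μ := by simp [Real.norm_eq_abs]
      _ ≤ ∫ y, ((M:ℝ) * |F n y - 1| + (s.indicator g y * F n y + s.indicator g y)) ∂μ :=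
          integral_mono hil hir hpt2
      _ = (M:ℝ) * TV n + (∫ y, s.indicator g y * F n y ∂μ + ∫ y, s.indicator g y ∂μ) := by
          rw [integral_add j4 j3, integral_add hindFg j2, integral_const_mul]
      _ < ε := by
          have hTM1 : T M < ε/4 := lt_of_lt_of_le hM (min_le_left _ _)
          have hTM2 : T M < ε*α/8 := lt_of_lt_of_le hM (min_le_right _ _)
          have hd : (T M + Hre n) / α < ε/4 := by
            rw [div_lt_iff₀ hα]
            nlinarith
          have hMTV : (M:ℝ) * TV n ≤ ε/4 := by
            have h1 : (M:ℝ) * TV n ≤ (M:ℝ) * (ε/(4*(M+1))) :=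
              mul_le_mul_of_nonneg_left hT3.le (Nat.cast_nonneg M)
            have h2 : (M:ℝ) * (ε/(4*((M:ℝ)+1))) ≤ ε/4 := by
              rw [mul_div_assoc', div_le_div_iff₀ (by positivity) (by norm_num)]
              nlinarith [Nat.cast_nonneg (α := ℝ) M, hε.le]
            linarith
          have h5 := htail1
          have h6 := htail2
          nlinarith
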